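/- Every pure separable bipartite state is an edge state of separable states: if ρ = |φ₁⟩⟨φ₁| ⊗ |φ₂⟩⟨φ₂| is a pure product state on ℂ^{d₁}⊗ℂ^{d₂} (with d₁, d₂ ≥ 2), then for every ε > 0 there exists an entangled state σ such that (ρ+εσ)/(1+ε) is entangled. -/

import Mathlib

open scoped ComplexOrder Kronecker

noncomputable section

/-- A quantum state: positive semidefinite with unit trace. -/
def IsQState {n : Type*} [Fintype n] [DecidableEq n] (ρ : Matrix n n ℂ) : Prop :=
  ρ.PosSemidef ∧ ρ.trace = 1

/-- The rank-one projector |ψ⟩⟨ψ| associated to a vector ψ. -/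
def outer {n : Type*} [Fintype n] (ψ : n → ℂ) : Matrix n n ℂ :=
  Matrix.of fun i j => ψ i * (starRingEnd ℂ) (ψ j)

/-- The partial trace over the second subsystem. -/
def ptraceB {d₁ d₂ : ℕ} (ρ : Matrix (Fin d₁ × Fin d₂) (Fin d₁ × Fin d₂) ℂ) :
    Matrix (Fin d₁) (Fin d₁) ℂ :=
  Matrix.of fun i k => ∑ j, ρ (i, j) (k, j)

/-- The I-concurrence of a pure state: C(|ψ⟩) = √(2(1 − Tr ρ_A²)). -/
def pureConc {d₁ d₂ : ℕ} (ψ : Fin d₁ × Fin d₂ → ℂ) : ℝ :=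
  Real.sqrt (2 * (1 - ((ptraceB (outer ψ) * ptraceB (outer ψ)).trace).re))

/-- The I-concurrence of a mixed state, via the convex roof. -/
def IConc {d₁ d₂ : ℕ} (ρ : Matrix (Fin d₁ × Fin d₂) (Fin d₁ × Fin d₂) ℂ) : ℝ :=
  sInf { x : ℝ | ∃ (m : ℕ) (p : Fin m → ℝ) (ψ : Fin m → (Fin d₁ × Fin d₂ → ℂ)),
    (∀ i, 0 ≤ p i) ∧ (∑ i, p i = 1) ∧
    (∀ i, ∑ k, Complex.normSq (ψ i k) = 1) ∧
    ρ = ∑ i, p i • outer (ψ i) ∧ x = ∑ i, p i * pureConc (ψ i) }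

/-- Separability of a bipartite state on ℂ^{d₁} ⊗ ℂ^{d₂}. -/
def IsSep {d₁ d₂ : ℕ} (ρ : Matrix (Fin d₁ × Fin d₂) (Fin d₁ × Fin d₂) ℂ) : Prop :=
  ∃ (m : ℕ) (p : Fin m → ℝ) (A : Fin m → Matrix (Fin d₁) (Fin d₁) ℂ)
    (B : Fin m → Matrix (Fin d₂) (Fin d₂) ℂ),
    (∀ i, 0 ≤ p i) ∧ (∑ i, p i = 1) ∧
    (∀ i, IsQState (A i)) ∧ (∀ i, IsQState (B i)) ∧
    ρ = ∑ i, p i • (A i ⊗ₖ B i)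

/-- An entangled bipartite state: a state which is not separable. -/
def IsEnt {d₁ d₂ : ℕ} (ρ : Matrix (Fin d₁ × Fin d₂) (Fin d₁ × Fin d₂) ℂ) : Prop :=
  IsQState ρ ∧ ¬ IsSep ρ

/-- The negative entanglement measure (NEM), via the I-concurrence. -/
def NEM {d₁ d₂ : ℕ} (ρ : Matrix (Fin d₁ × Fin d₂) (Fin d₁ × Fin d₂) ℂ) : ℝ :=
  - sInf { x : ℝ | ∃ (t : ℝ) (σ : Matrix (Fin d₁ × Fin d₂) (Fin d₁ × Fin d₂) ℂ),
      0 < t ∧ IsEnt σ ∧ 0 < IConc ((1 / (1 + t)) • (ρ + t • σ)) ∧ x = t * IConc σ }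

/-- An edge state of separable states (ESS). -/
def IsESS {d₁ d₂ : ℕ} (ρ : Matrix (Fin d₁ × Fin d₂) (Fin d₁ × Fin d₂) ℂ) : Prop :=
  ∀ ε : ℝ, 0 < ε → ∃ σ, IsEnt σ ∧ IsEnt ((1 / (1 + ε)) • (ρ + ε • σ))


open Matrix in
/-- partial transpose over the second factor -/
def PT {d₁ d₂ : ℕ} (M : Matrix (Fin d₁ × Fin d₂) (Fin d₁ × Fin d₂) ℂ) :
    Matrix (Fin d₁ × Fin d₂) (Fin d₁ × Fin d₂) ℂ :=
  Matrix.of fun p q => M (p.1, q.2) (q.1, p.2)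

section AuxLemmas
open Matrix

lemma kron_conjTranspose {d₁ d₂ : ℕ} (A : Matrix (Fin d₁) (Fin d₁) ℂ)
    (B : Matrix (Fin d₂) (Fin d₂) ℂ) : (A ⊗ₖ B)ᴴ = Aᴴ ⊗ₖ Bᴴ := by
  ext ⟨i,j⟩ ⟨k,l⟩
  simp [Matrix.conjTranspose_apply, Matrix.kroneckerMap_apply, mul_comm]

lemma kron_posSemidef {d₁ d₂ : ℕ} {A : Matrix (Fin d₁) (Fin d₁) ℂ}
    {B : Matrix (Fin d₂) (Fin d₂) ℂ} (hA : A.PosSemidef) (hB : B.PosSemidef) :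
    (A ⊗ₖ B).PosSemidef := by
  exact hA.kronecker hB

lemma PT_kron {d₁ d₂ : ℕ} (A : Matrix (Fin d₁) (Fin d₁) ℂ)
    (B : Matrix (Fin d₂) (Fin d₂) ℂ) : PT (A ⊗ₖ B) = A ⊗ₖ Bᵀ := by
  ext ⟨i,j⟩ ⟨k,l⟩
  simp [PT, Matrix.kroneckerMap_apply, Matrix.transpose_apply]

lemma real_smul_matrix {n : Type*} (r : ℝ) (M : Matrix n n ℂ) : r • M = (r : ℂ) • M := by
  ext i j
  simp [Complex.real_smul]

lemma posSemidef_real_smul {n : Type*} [Fintype n] {M : Matrix n n ℂ} (h : M.PosSemidef)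
    {r : ℝ} (hr : 0 ≤ r) : (r • M).PosSemidef := by
  rw [real_smul_matrix]
  refine Matrix.PosSemidef.of_dotProduct_mulVec_nonneg ?_ ?_
  · have h1 := h.1
    rw [Matrix.IsHermitian, Matrix.conjTranspose_smul]
    rw [Matrix.IsHermitian] at h1
    rw [h1]
    norm_num
  · intro x
    rw [Matrix.smul_mulVec, dotProduct_smul, smul_eq_mul]
    exact mul_nonneg (by exact_mod_cast hr) (h.dotProduct_mulVec_nonneg x)

lemma posSemidef_sum {n : Type*} [Fintype n] {ι : Type*} (s : Finset ι)
    (M : ι → Matrix n n ℂ) (h : ∀ i ∈ s, (M i).PosSemidef) :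
    (∑ i ∈ s, M i).PosSemidef :=
  Finset.sum_induction M _ (fun _ _ ha hb => ha.add hb) Matrix.PosSemidef.zero h

lemma PT_sum {d₁ d₂ : ℕ} {m : ℕ} (p : Fin m → ℝ)
    (M : Fin m → Matrix (Fin d₁ × Fin d₂) (Fin d₁ × Fin d₂) ℂ) :
    PT (∑ i, p i • M i) = ∑ i, p i • PT (M i) := by
  ext ⟨i,j⟩ ⟨k,l⟩
  simp [PT, Matrix.sum_apply]

lemma PT_add {d₁ d₂ : ℕ} (M N : Matrix (Fin d₁ × Fin d₂) (Fin d₁ × Fin d₂) ℂ) :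
    PT (M + N) = PT M + PT N := by
  ext ⟨i,j⟩ ⟨k,l⟩
  simp [PT]

lemma PT_smul {d₁ d₂ : ℕ} (r : ℝ) (M : Matrix (Fin d₁ × Fin d₂) (Fin d₁ × Fin d₂) ℂ) :
    PT (r • M) = r • PT M := by
  ext ⟨i,j⟩ ⟨k,l⟩
  simp [PT]

lemma sep_PT_posSemidef {d₁ d₂ : ℕ} {χ : Matrix (Fin d₁ × Fin d₂) (Fin d₁ × Fin d₂) ℂ}
    (h : IsSep χ) : (PT χ).PosSemidef := by
  obtain ⟨m, p, A, B, hp, -, hA, hB, rfl⟩ := h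
  rw [PT_sum]
  refine posSemidef_sum _ _ fun i _ => ?_
  rw [PT_kron]
  exact posSemidef_real_smul (kron_posSemidef (hA i).1 ((hB i).1.transpose)) (hp i)

lemma outer_posSemidef {n : Type*} [Fintype n] (ψ : n → ℂ) : (outer ψ).PosSemidef := by
  refine Matrix.PosSemidef.of_dotProduct_mulVec_nonneg ?_ ?_
  · ext i j
    simp [outer, Matrix.conjTranspose_apply, mul_comm]
  · intro x
    have h1 : star x ⬝ᵥ (outer ψ).mulVec x
        = (∑ i, star (x i) * ψ i) * (∑ j, (starRingEnd ℂ) (ψ j) * x j) := by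
      simp only [dotProduct, Matrix.mulVec, outer, Matrix.of_apply, Pi.star_apply]
      rw [Finset.sum_mul_sum]
      refine Finset.sum_congr rfl fun i _ => ?_
      rw [Finset.mul_sum]
      exact Finset.sum_congr rfl fun j _ => by ring
    have h2 : (∑ i, star (x i) * ψ i) = star (∑ j, (starRingEnd ℂ) (ψ j) * x j) := by
      rw [star_sum]
      refine Finset.sum_congr rfl fun j _ => ?_
      simp [RCLike.star_def, mul_comm]
    rw [h1, h2]
    exact star_mul_self_nonneg _

lemma sum_factor {n m : Type*} [Fintype n] [Fintype m] (X : n → ℂ) (Y : m → ℂ) :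
    ∑ i, ∑ k, X i * Y k = (∑ i, X i) * (∑ k, Y k) := (Finset.sum_mul_sum _ _ _ _).symm

lemma double_sum_factor {n m : Type*} [Fintype n] [Fintype m] (c : ℂ) (X : n → ℂ) (Y : m → ℂ) :
    ∑ i, ∑ k, c * (X i * Y k) = c * ((∑ i, X i) * (∑ k, Y k)) := by
  rw [← sum_factor, Finset.mul_sum]
  refine Finset.sum_congr rfl fun i _ => ?_
  rw [Finset.mul_sum]

lemma qf_PT_outer {d₁ d₂ : ℕ} (ψ v : Fin d₁ × Fin d₂ → ℂ) :
    star v ⬝ᵥ (PT (outer ψ)).mulVec v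
      = ∑ i, ∑ k, (∑ l, ψ (i,l) * v (k,l)) * (starRingEnd ℂ) (∑ j, ψ (k,j) * v (i,j)) := by
  simp only [dotProduct, Matrix.mulVec, PT, outer, Matrix.of_apply, Pi.star_apply,
    Fintype.sum_prod_type, map_sum, _root_.map_mul, Finset.sum_mul, Finset.mul_sum]
  refine Finset.sum_congr rfl fun i _ => ?_
  conv_lhs => rw [Finset.sum_comm]
  refine Finset.sum_congr rfl fun k _ => ?_
  conv_lhs => rw [Finset.sum_comm]
  conv_rhs => rw [Finset.sum_comm]
  refine Finset.sum_congr rfl fun l _ => Finset.sum_congr rfl fun j _ => ?_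
  simp only [RCLike.star_def]
  ring

lemma double_sum_factor4 {n m : Type*} [Fintype n] [Fintype m] (c1 c2 c3 c4 : ℂ)
    (X1 X2 X3 X4 : n → ℂ) (Y1 Y2 Y3 Y4 : m → ℂ) :
    ∑ i, ∑ k, (c1 * (X1 i * Y1 k) + c2 * (X2 i * Y2 k) + c3 * (X3 i * Y3 k)
        + c4 * (X4 i * Y4 k))
      = c1 * ((∑ i, X1 i) * (∑ k, Y1 k)) + c2 * ((∑ i, X2 i) * (∑ k, Y2 k))
        + c3 * ((∑ i, X3 i) * (∑ k, Y3 k)) + c4 * ((∑ i, X4 i) * (∑ k, Y4 k)) := by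
  simp only [Finset.sum_add_distrib, double_sum_factor]

end AuxLemmas

section comp
open Matrix

variable {d₁ d₂ : ℕ} (g e : Fin d₁ → ℂ) (h f : Fin d₂ → ℂ) (a : ℝ)

def vwit : Fin d₁ × Fin d₂ → ℂ :=
  fun p => (a : ℂ) * g p.1 * (starRingEnd ℂ) (h p.2) - e p.1 * (starRingEnd ℂ) (f p.2)

def psi0 : Fin d₁ × Fin d₂ → ℂ := fun p => g p.1 * h p.2

def PsiV : Fin d₁ × Fin d₂ → ℂ :=
  fun p => ((Real.sqrt 2 : ℝ)⁻¹ : ℂ) * (g p.1 * f p.2 + e p.1 * h p.2)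

variable (hg : ∑ i, g i * (starRingEnd ℂ) (g i) = 1)
  (he : ∑ i, e i * (starRingEnd ℂ) (e i) = 1)
  (hge : ∑ i, g i * (starRingEnd ℂ) (e i) = 0)
  (hh : ∑ l, h l * (starRingEnd ℂ) (h l) = 1)
  (hf : ∑ l, f l * (starRingEnd ℂ) (f l) = 1)
  (hhf : ∑ l, h l * (starRingEnd ℂ) (f l) = 0)

lemma rev_zero {n : Type*} [Fintype n] {x y : n → ℂ}
    (hxy : ∑ i, x i * (starRingEnd ℂ) (y i) = 0) :
    ∑ i, y i * (starRingEnd ℂ) (x i) = 0 := by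
  have := congrArg (starRingEnd ℂ) hxy
  simpa [map_sum, mul_comm] using this

include hh hhf in
lemma F0_eval (i k : Fin d₁) :
    ∑ l, psi0 g h (i, l) * vwit g e h f a (k, l) = (a : ℂ) * (g i * g k) := by
  have step : ∀ l, psi0 g h (i, l) * vwit g e h f a (k, l)
      = ((a : ℂ) * (g i * g k)) * (h l * (starRingEnd ℂ) (h l))
        - (g i * e k) * (h l * (starRingEnd ℂ) (f l)) := by
    intro l; simp only [psi0, vwit]; ring
  rw [Finset.sum_congr rfl fun l _ => step l, Finset.sum_sub_distrib,
    ← Finset.mul_sum, ← Finset.mul_sum, hh, hhf]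
  ring

include hh hf hhf in
lemma FPsi_eval (i k : Fin d₁) :
    ∑ l, PsiV g e h f (i, l) * vwit g e h f a (k, l)
      = ((Real.sqrt 2 : ℝ)⁻¹ : ℂ) * ((a : ℂ) * (e i * g k) - g i * e k) := by
  have hfh : ∑ l, f l * (starRingEnd ℂ) (h l) = 0 := rev_zero hhf
  have step : ∀ l, PsiV g e h f (i, l) * vwit g e h f a (k, l)
      = (((Real.sqrt 2 : ℝ)⁻¹ : ℂ) * (a : ℂ) * (g i * g k)) * (f l * (starRingEnd ℂ) (h l))
        + (-(((Real.sqrt 2 : ℝ)⁻¹ : ℂ)) * (g i * e k)) * (f l * (starRingEnd ℂ) (f l))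
        + (((Real.sqrt 2 : ℝ)⁻¹ : ℂ) * (a : ℂ) * (e i * g k)) * (h l * (starRingEnd ℂ) (h l))
        + (-(((Real.sqrt 2 : ℝ)⁻¹ : ℂ)) * (e i * e k)) * (h l * (starRingEnd ℂ) (f l)) := by
    intro l; simp only [PsiV, vwit]; ring
  rw [Finset.sum_congr rfl fun l _ => step l]
  simp only [Finset.sum_add_distrib, ← Finset.mul_sum]
  rw [hfh, hf, hh, hhf]
  ring

lemma sqrt2_sq : (((Real.sqrt 2 : ℝ)⁻¹ : ℂ))^2 = 1/2 := by
  have h2 : (Real.sqrt 2)^2 = 2 := Real.sq_sqrt (by norm_num)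
  rw [inv_pow, ← Complex.ofReal_pow, h2]
  norm_num

include hg hh hhf in
lemma Q_rho :
    star (vwit g e h f a) ⬝ᵥ (PT (outer (psi0 g h))).mulVec (vwit g e h f a)
      = ((a : ℂ))^2 := by
  rw [qf_PT_outer]
  have step : ∀ i k : Fin d₁,
      (∑ l, psi0 g h (i, l) * vwit g e h f a (k, l))
        * (starRingEnd ℂ) (∑ j, psi0 g h (k, j) * vwit g e h f a (i, j))
      = ((a : ℂ))^2 * ((g i * (starRingEnd ℂ) (g i)) * (g k * (starRingEnd ℂ) (g k))) := by
    intro i k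
    rw [F0_eval g e h f a hh hhf, F0_eval g e h f a hh hhf]
    simp only [_root_.map_mul, Complex.conj_ofReal]
    ring
  rw [Finset.sum_congr rfl fun i _ => Finset.sum_congr rfl fun k _ => step i k,
    double_sum_factor, hg]
  ring

include hg he hge hh hf hhf in
lemma Q_Psi :
    star (vwit g e h f a) ⬝ᵥ (PT (outer (PsiV g e h f))).mulVec (vwit g e h f a)
      = -(a : ℂ) := by
  have heg : ∑ i, e i * (starRingEnd ℂ) (g i) = 0 := rev_zero hge
  rw [qf_PT_outer]
  have step : ∀ i k : Fin d₁,
      (∑ l, PsiV g e h f (i, l) * vwit g e h f a (k, l))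
        * (starRingEnd ℂ) (∑ j, PsiV g e h f (k, j) * vwit g e h f a (i, j))
      = (((Real.sqrt 2 : ℝ)⁻¹ : ℂ))^2 * ((a:ℂ))^2
            * ((e i * (starRingEnd ℂ) (g i)) * (g k * (starRingEnd ℂ) (e k)))
        + (-((((Real.sqrt 2 : ℝ)⁻¹ : ℂ))^2 * (a:ℂ)))
            * ((e i * (starRingEnd ℂ) (e i)) * (g k * (starRingEnd ℂ) (g k)))
        + (-((((Real.sqrt 2 : ℝ)⁻¹ : ℂ))^2 * (a:ℂ)))
            * ((g i * (starRingEnd ℂ) (g i)) * (e k * (starRingEnd ℂ) (e k)))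
        + (((Real.sqrt 2 : ℝ)⁻¹ : ℂ))^2
            * ((g i * (starRingEnd ℂ) (e i)) * (e k * (starRingEnd ℂ) (g k))) := by
    intro i k
    rw [FPsi_eval g e h f a hh hf hhf, FPsi_eval g e h f a hh hf hhf]
    simp only [_root_.map_mul, map_sub, map_inv₀, Complex.conj_ofReal]
    ring
  rw [Finset.sum_congr rfl fun i _ => Finset.sum_congr rfl fun k _ => step i k,
    double_sum_factor4, hg, he, hge, heg, sqrt2_sq]
  ring

lemma outer_trace' {n : Type*} [Fintype n] (ψ : n → ℂ) :
    (outer ψ).trace = ∑ p, ψ p * (starRingEnd ℂ) (ψ p) := by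
  simp [Matrix.trace, Matrix.diag, outer]

include hg hh in
lemma trace_psi0 : (outer (psi0 g h)).trace = 1 := by
  rw [outer_trace', Fintype.sum_prod_type]
  have step : ∀ (i : Fin d₁) (l : Fin d₂), psi0 g h (i, l) * (starRingEnd ℂ) (psi0 g h (i, l))
      = (g i * (starRingEnd ℂ) (g i)) * (h l * (starRingEnd ℂ) (h l)) := by
    intro i l; simp only [psi0, _root_.map_mul]; ring
  rw [Finset.sum_congr rfl fun i _ => Finset.sum_congr rfl fun l _ => step i l,
    sum_factor, hg, hh]
  norm_num

include hg he hge hh hf hhf in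
lemma trace_Psi : (outer (PsiV g e h f)).trace = 1 := by
  have heg : ∑ i, e i * (starRingEnd ℂ) (g i) = 0 := rev_zero hge
  have hfh : ∑ l, f l * (starRingEnd ℂ) (h l) = 0 := rev_zero hhf
  rw [outer_trace', Fintype.sum_prod_type]
  have step : ∀ (i : Fin d₁) (l : Fin d₂),
      PsiV g e h f (i, l) * (starRingEnd ℂ) (PsiV g e h f (i, l))
      = (((Real.sqrt 2 : ℝ)⁻¹ : ℂ))^2
            * ((g i * (starRingEnd ℂ) (g i)) * (f l * (starRingEnd ℂ) (f l)))
        + (((Real.sqrt 2 : ℝ)⁻¹ : ℂ))^2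
            * ((g i * (starRingEnd ℂ) (e i)) * (f l * (starRingEnd ℂ) (h l)))
        + (((Real.sqrt 2 : ℝ)⁻¹ : ℂ))^2
            * ((e i * (starRingEnd ℂ) (g i)) * (h l * (starRingEnd ℂ) (f l)))
        + (((Real.sqrt 2 : ℝ)⁻¹ : ℂ))^2
            * ((e i * (starRingEnd ℂ) (e i)) * (h l * (starRingEnd ℂ) (h l))) := by
    intro i l; simp only [PsiV, _root_.map_mul, map_add, map_inv₀, Complex.conj_ofReal]; ring
  rw [Finset.sum_congr rfl fun i _ => Finset.sum_congr rfl fun l _ => step i l]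
  rw [double_sum_factor4, hg, he, hge, heg, hh, hf, hhf, hfh, sqrt2_sq]
  norm_num

end comp

lemma exists_ortho {d : ℕ} (hd : 2 ≤ d) (g : Fin d → ℂ)
    (hg : ∑ i, Complex.normSq (g i) = 1) :
    ∃ e : Fin d → ℂ, (∑ i, e i * (starRingEnd ℂ) (e i) = 1)
      ∧ (∑ i, g i * (starRingEnd ℂ) (e i) = 0) := by
  have hgc : ∑ i, g i * (starRingEnd ℂ) (g i) = 1 := by
    have := congrArg (Complex.ofReal) hg
    push_cast at this
    simpa [Complex.mul_conj] using this
  set i0 : Fin d := ⟨0, by omega⟩ with hi0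
  set i1 : Fin d := ⟨1, by omega⟩ with hi1
  have hne : i1 ≠ i0 := by simp [hi0, hi1, Fin.ext_iff]
  set r : ℝ := 1 - Complex.normSq (g i0) with hr
  have hr0 : 0 ≤ r := by
    have hle : Complex.normSq (g i0) ≤ 1 := by
      rw [← hg]
      exact Finset.single_le_sum (fun i _ => Complex.normSq_nonneg (g i))
        (Finset.mem_univ i0)
    simp [hr]; linarith
  rcases eq_or_lt_of_le hr0 with hz | hpos
  · -- r = 0 : g is concentrated on i0, take basis vector i1
    have hrest : ∑ i ∈ Finset.univ.erase i0, Complex.normSq (g i) = 0 := by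
      have hsplit : Complex.normSq (g i0) + ∑ i ∈ Finset.univ.erase i0, Complex.normSq (g i)
          = 1 := by
        exact (Finset.add_sum_erase _ (fun i => Complex.normSq (g i))
          (Finset.mem_univ i0)).trans hg
      have hg0 : Complex.normSq (g i0) = 1 := by simp [hr] at hz; linarith
      linarith
    have hg1 : g i1 = 0 := by
      have h0 : Complex.normSq (g i1) = 0 := by
        have := (Finset.sum_eq_zero_iff_of_nonneg
          (fun i _ => Complex.normSq_nonneg (g i))).mp hrest i1
          (Finset.mem_erase.mpr ⟨hne, Finset.mem_univ i1⟩)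
        exact this
      exact Complex.normSq_eq_zero.mp h0
    refine ⟨fun i => if i = i1 then 1 else 0, ?_, ?_⟩
    · simp [apply_ite, Finset.sum_ite_eq']
    · simp [apply_ite, mul_ite, Finset.sum_ite_eq', hg1]
  · -- r > 0 : Gram–Schmidt
    set e0 : Fin d → ℂ :=
      fun i => (if i = i0 then 1 else 0) - (starRingEnd ℂ) (g i0) * g i with he0
    have ortho0 : ∑ i, g i * (starRingEnd ℂ) (e0 i) = 0 := by
      have step : ∀ i, g i * (starRingEnd ℂ) (e0 i)
          = (if i = i0 then g i else 0) - g i0 * (g i * (starRingEnd ℂ) (g i)) := by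
        intro i
        simp only [he0, map_sub, _root_.map_mul, Complex.conj_conj, apply_ite,
          _root_.map_one, _root_.map_zero]
        split <;> rename_i hii
        · subst hii; ring
        · ring
      rw [Finset.sum_congr rfl fun i _ => step i, Finset.sum_sub_distrib,
        Finset.sum_ite_eq' Finset.univ i0 g, ← Finset.mul_sum, hgc]
      simp
    have norm0 : ∑ i, e0 i * (starRingEnd ℂ) (e0 i) = (r : ℂ) := by
      have step : ∀ i, e0 i * (starRingEnd ℂ) (e0 i)
          = (if i = i0 then 1 else 0)
            - (if i = i0 then ((starRingEnd ℂ) (g i0) * g i) else 0)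
            - (if i = i0 then (g i0 * (starRingEnd ℂ) (g i)) else 0)
            + ((starRingEnd ℂ) (g i0) * g i0) * (g i * (starRingEnd ℂ) (g i)) := by
        intro i
        simp only [he0, map_sub, _root_.map_mul, Complex.conj_conj, apply_ite,
          _root_.map_one, _root_.map_zero]
        split <;> rename_i hii
        · subst hii; ring
        · ring
      rw [Finset.sum_congr rfl fun i _ => step i]
      simp only [Finset.sum_add_distrib, Finset.sum_sub_distrib, Finset.sum_ite_eq',
        Finset.mem_univ, if_true, ← Finset.mul_sum, hgc]
      have hmc : (starRingEnd ℂ) (g i0) * g i0 = (Complex.normSq (g i0) : ℂ) :=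
        Complex.normSq_eq_conj_mul_self.symm
      have hmc2 : g i0 * (starRingEnd ℂ) (g i0) = (Complex.normSq (g i0) : ℂ) :=
        Complex.mul_conj (g i0)
      rw [hmc, hmc2, hr]
      push_cast
      ring
    refine ⟨fun i => ((Real.sqrt r)⁻¹ : ℂ) * e0 i, ?_, ?_⟩
    · have step : ∀ i, (((Real.sqrt r)⁻¹ : ℂ) * e0 i)
          * (starRingEnd ℂ) (((Real.sqrt r)⁻¹ : ℂ) * e0 i)
          = (((Real.sqrt r : ℝ)⁻¹ : ℂ))^2 * (e0 i * (starRingEnd ℂ) (e0 i)) := by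
        intro i
        simp only [_root_.map_mul, map_inv₀, Complex.conj_ofReal]
        ring
      rw [Finset.sum_congr rfl fun i _ => step i, ← Finset.mul_sum, norm0]
      rw [inv_pow, ← Complex.ofReal_pow, Real.sq_sqrt hr0]
      rw [← Complex.ofReal_inv, ← Complex.ofReal_mul]
      rw [inv_mul_cancel₀ (ne_of_gt hpos)]
      norm_num
    · have step : ∀ i, g i * (starRingEnd ℂ) (((Real.sqrt r)⁻¹ : ℂ) * e0 i)
          = (((Real.sqrt r : ℝ)⁻¹ : ℂ)) * (g i * (starRingEnd ℂ) (e0 i)) := by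
        intro i
        simp only [_root_.map_mul, map_inv₀, Complex.conj_ofReal]
        ring
      rw [Finset.sum_congr rfl fun i _ => step i, ← Finset.mul_sum, ortho0]
      simp

/-- every pure separable bipartite state, i.e. every pure product
state ρ = |φ₁⟩⟨φ₁| ⊗ |φ₂⟩⟨φ₂|, is an edge state of separable states. -/
theorem pure_product_is_ess (d₁ d₂ : ℕ) (hd₁ : 2 ≤ d₁) (hd₂ : 2 ≤ d₂)
    (φ₁ : Fin d₁ → ℂ) (φ₂ : Fin d₂ → ℂ)
    (hφ₁ : ∑ i, Complex.normSq (φ₁ i) = 1) (hφ₂ : ∑ j, Complex.normSq (φ₂ j) = 1) :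
    IsESS (outer (fun q : Fin d₁ × Fin d₂ => φ₁ q.1 * φ₂ q.2)) := by
  intro ε hε
  obtain ⟨e, he, hge⟩ := exists_ortho hd₁ φ₁ hφ₁
  obtain ⟨f, hf, hhf⟩ := exists_ortho hd₂ φ₂ hφ₂
  have hg : ∑ i, φ₁ i * (starRingEnd ℂ) (φ₁ i) = 1 := by
    have := congrArg (Complex.ofReal) hφ₁
    push_cast at this
    simpa [Complex.mul_conj] using this
  have hh : ∑ l, φ₂ l * (starRingEnd ℂ) (φ₂ l) = 1 := by
    have := congrArg (Complex.ofReal) hφ₂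
    push_cast at this
    simpa [Complex.mul_conj] using this
  have hρ : outer (fun q : Fin d₁ × Fin d₂ => φ₁ q.1 * φ₂ q.2) = outer (psi0 φ₁ φ₂) := rfl
  rw [hρ]
  have hσQ : IsQState (outer (PsiV φ₁ e φ₂ f)) :=
    ⟨outer_posSemidef _, trace_Psi φ₁ e φ₂ f hg he hge hh hf hhf⟩
  have hσEnt : IsEnt (outer (PsiV φ₁ e φ₂ f)) := by
    refine ⟨hσQ, fun hsep => ?_⟩
    have h0 := (sep_PT_posSemidef hsep).dotProduct_mulVec_nonneg (vwit φ₁ e φ₂ f 1)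
    rw [Q_Psi φ₁ e φ₂ f 1 hg he hge hh hf hhf] at h0
    have hm1 : -((1:ℝ) : ℂ) = ((-1 : ℝ) : ℂ) := by norm_num
    rw [hm1, Complex.zero_le_real] at h0
    linarith
  refine ⟨outer (PsiV φ₁ e φ₂ f), hσEnt, ?_⟩
  have hc0 : (0:ℝ) ≤ 1 / (1 + ε) := by positivity
  have hτQ : IsQState ((1 / (1 + ε)) •
      (outer (psi0 φ₁ φ₂) + ε • outer (PsiV φ₁ e φ₂ f))) := by
    constructor
    · exact posSemidef_real_smul ((outer_posSemidef _).add
        (posSemidef_real_smul (outer_posSemidef _) hε.le)) hc0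
    · rw [real_smul_matrix, Matrix.trace_smul, Matrix.trace_add,
        real_smul_matrix ε, Matrix.trace_smul,
        trace_psi0 φ₁ φ₂ hg hh, trace_Psi φ₁ e φ₂ f hg he hge hh hf hhf]
      have hne : (1 + ε : ℝ) ≠ 0 := by positivity
      rw [smul_eq_mul, smul_eq_mul]
      push_cast
      field_simp
  refine ⟨hτQ, fun hsep => ?_⟩
  have h0 := (sep_PT_posSemidef hsep).dotProduct_mulVec_nonneg (vwit φ₁ e φ₂ f (ε/2))
  rw [PT_smul, PT_add, PT_smul] at h0
  rw [real_smul_matrix, Matrix.smul_mulVec, Matrix.add_mulVec,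
    real_smul_matrix ε, Matrix.smul_mulVec, dotProduct_smul,
    dotProduct_add, dotProduct_smul, smul_eq_mul, smul_eq_mul,
    Q_rho φ₁ e φ₂ f (ε/2) hg hh hhf, Q_Psi φ₁ e φ₂ f (ε/2) hg he hge hh hf hhf] at h0
  have key : ((1/(1+ε) : ℝ) : ℂ) * (((ε/2 : ℝ) : ℂ)^2 + (ε : ℂ) * (-((ε/2 : ℝ) : ℂ)))
      = (((1/(1+ε)) * ((ε/2)^2 - ε*(ε/2)) : ℝ) : ℂ) := by
    push_cast
    ring
  rw [key, Complex.zero_le_real] at h0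
  have h1 : 0 < 1/(1+ε) := by positivity
  have h2 : (ε/2)^2 - ε*(ε/2) = -(ε^2/4) := by ring
  rw [h2] at h0
  have h3 : 0 < 1/(1+ε) * (ε^2/4) := by positivity
  linarith

end
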